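/- Let β > 0, 0 < α_m ≤ α_M with α_m ≠ β and α_M ≠ β, let A_+, A_- ∈ (0,1], and let τ_+, τ_- > 0. For α > 0 with α ≠ β and τ > 0 set X(α,τ) := (α²/(τβ+1) − β²/(τα+1))/(α² − β²). Then the inequality A_+ · (α_M/(α_m+β)) · (1 − X(α_M, τ_+)) < A_- · (α_m/(α_M+β)) · (1 − X(α_m, τ_-)) holds if and only if (α_M² A_+ τ_+ (α_M τ_+ + β τ_+ + 1)(τ_- α_m + 1)(τ_- β + 1)) / (α_m² A_- τ_- (α_m τ_- + β τ_- + 1)(τ_+ α_M + 1)(τ_+ β + 1)) < 1. -/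

import Mathlib

lemma oneSubX (α β τ : ℝ) (hα : 0 < α) (hβ : 0 < β) (hτ : 0 < τ) (hαβ : α ≠ β) :
    1 - (α ^ 2 / (τ * β + 1) - β ^ 2 / (τ * α + 1)) / (α ^ 2 - β ^ 2)
      = τ * α * β * (τ * α + τ * β + 1) / ((α + β) * ((τ * β + 1) * (τ * α + 1))) := by
  have h1 : τ * β + 1 ≠ 0 := by positivity
  have h2 : τ * α + 1 ≠ 0 := by positivity
  have h3 : α + β ≠ 0 := by positivity
  have h4 : α ^ 2 - β ^ 2 ≠ 0 := by
    have : α - β ≠ 0 := sub_ne_zero.mpr hαβ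
    have h5 : α ^ 2 - β ^ 2 = (α + β) * (α - β) := by ring
    rw [h5]; exact mul_ne_zero h3 this
  field_simp
  ring

/-- The inequality « upper bound on the averaged potentiation rate < lower bound on the
averaged depression rate » is equivalent to the paper's simple parameter condition for
positive recurrence of the weight process. -/
theorem recurrence_parameter_condition_iff
    (β αm αM Ap Am τp τm : ℝ)
    (hβ : 0 < β) (hαm : 0 < αm) (hαmM : αm ≤ αM)
    (hmβ : αm ≠ β) (hMβ : αM ≠ β)
    (hAp : Ap ∈ Set.Ioc (0 : ℝ) 1) (hAm : Am ∈ Set.Ioc (0 : ℝ) 1)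
    (hτp : 0 < τp) (hτm : 0 < τm)
    (X : ℝ → ℝ → ℝ)
    (hX : ∀ α τ : ℝ, X α τ = (α ^ 2 / (τ * β + 1) - β ^ 2 / (τ * α + 1)) / (α ^ 2 - β ^ 2)) :
    (Ap * (αM / (αm + β)) * (1 - X αM τp) < Am * (αm / (αM + β)) * (1 - X αm τm))
      ↔
    (αM ^ 2 * Ap * τp * (αM * τp + β * τp + 1) * (τm * αm + 1) * (τm * β + 1))
        / (αm ^ 2 * Am * τm * (αm * τm + β * τm + 1) * (τp * αM + 1) * (τp * β + 1)) < 1 := by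
  obtain ⟨hAp0, -⟩ := hAp
  obtain ⟨hAm0, -⟩ := hAm
  have hαM : 0 < αM := lt_of_lt_of_le hαm hαmM
  rw [hX, hX, oneSubX αM β τp hαM hβ hτp hMβ, oneSubX αm β τm hαm hβ hτm hmβ]
  have hD' : 0 < αm ^ 2 * Am * τm * (αm * τm + β * τm + 1) * (τp * αM + 1) * (τp * β + 1) := by
    positivity
  set K : ℝ := (αm + β) * (αM + β) * ((τp * β + 1) * (τp * αM + 1)) *
      ((τm * β + 1) * (τm * αm + 1)) with hKdef
  have hK : 0 < K := by rw [hKdef]; positivity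
  rw [← mul_lt_mul_iff_left₀ hK]
  have h1 : αm + β ≠ 0 := by positivity
  have h2 : αM + β ≠ 0 := by positivity
  have h3 : τp * β + 1 ≠ 0 := by positivity
  have h4 : τp * αM + 1 ≠ 0 := by positivity
  have h5 : τm * β + 1 ≠ 0 := by positivity
  have h6 : τm * αm + 1 ≠ 0 := by positivity
  have eA : Ap * (αM / (αm + β)) *
      (τp * αM * β * (τp * αM + τp * β + 1) / ((αM + β) * ((τp * β + 1) * (τp * αM + 1)))) * K
      = β * (αM ^ 2 * Ap * τp * (αM * τp + β * τp + 1) * (τm * αm + 1) * (τm * β + 1)) := by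
    rw [hKdef]; field_simp
  have eB : Am * (αm / (αM + β)) *
      (τm * αm * β * (τm * αm + τm * β + 1) / ((αm + β) * ((τm * β + 1) * (τm * αm + 1)))) * K
      = β * (αm ^ 2 * Am * τm * (αm * τm + β * τm + 1) * (τp * αM + 1) * (τp * β + 1)) := by
    rw [hKdef]; field_simp
  rw [eA, eB, mul_lt_mul_iff_right₀ hβ]
  exact (div_lt_one hD').symm
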